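/- Let U be a separable real Banach space and let ν be a Borel measure on U such that ∫_U ⟨u,a⟩² ν(du) < ∞ for every a ∈ U*. Then there exists a constant C ≥ 0 such that for all a, b ∈ U* the function u ↦ ⟨u,a⟩⟨u,b⟩ is ν-integrable and |∫_U ⟨u,a⟩⟨u,b⟩ ν(du)| ≤ C² ‖a‖ ‖b‖; in particular, for each fixed a ∈ U* the linear map b ↦ ∫_U ⟨u,a⟩⟨u,b⟩ ν(du) is a continuous linear functional on U*. -/

import Mathlib

open MeasureTheory Filter Topology

/-- If ν is a Borel measure on a separable Banach space U with
∫ ⟨u,a⟩² ν(du) < ∞ for all a ∈ U*, then there is C ≥ 0 such that for all a, b ∈ U*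
the function u ↦ ⟨u,a⟩⟨u,b⟩ is ν-integrable with |∫ ⟨u,a⟩⟨u,b⟩ ν(du)| ≤ C² ‖a‖ ‖b‖;
in particular, for fixed a the map b ↦ ∫ ⟨u,a⟩⟨u,b⟩ ν(du) is a continuous linear
functional on U*. -/
theorem pairing_product_integral_bounded
    {U : Type*} [NormedAddCommGroup U] [NormedSpace ℝ U] [CompleteSpace U]
    [TopologicalSpace.SeparableSpace U] [MeasurableSpace U] [BorelSpace U]
    (ν : Measure U)
    (hint : ∀ a : U →L[ℝ] ℝ, Integrable (fun u => (a u) ^ 2) ν) :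
    ∃ C : ℝ, 0 ≤ C ∧
      (∀ a b : U →L[ℝ] ℝ, Integrable (fun u => a u * b u) ν ∧
        |∫ u, a u * b u ∂ν| ≤ C ^ 2 * ‖a‖ * ‖b‖) ∧
      (∀ a : U →L[ℝ] ℝ, ∃ φ : (U →L[ℝ] ℝ) →L[ℝ] ℝ,
        ∀ b : U →L[ℝ] ℝ, φ b = ∫ u, a u * b u ∂ν) := by
  have hmem : ∀ a : U →L[ℝ] ℝ, MemLp (fun u => a u) 2 ν := fun a =>
    (memLp_two_iff_integrable_sq a.continuous.aestronglyMeasurable).mpr (hint a)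
  -- the linear map into L²
  let T : (U →L[ℝ] ℝ) →ₗ[ℝ] Lp ℝ 2 ν :=
    { toFun := fun a => (hmem a).toLp _
      map_add' := by
        intro a b
        rw [← MemLp.toLp_add (hmem a) (hmem b)]
        exact MemLp.toLp_congr _ _ (by filter_upwards with u; simp)
      map_smul' := by
        intro c a
        show (hmem (c • a)).toLp _ = c • (hmem a).toLp _
        rw [← MemLp.toLp_const_smul c (hmem a)]
        exact MemLp.toLp_congr _ _ (by filter_upwards with u; simp) }
  have hTa : ∀ a : U →L[ℝ] ℝ, (T a : U → ℝ) =ᵐ[ν] fun u => a u := fun a =>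
    MemLp.coeFn_toLp (hmem a)
  -- closed graph theorem gives continuity of T
  have hcont : Continuous T := by
    apply T.continuous_of_seq_closed_graph
    intro s a g hs hTs
    obtain ⟨ns, hns, hae⟩ :=
      (tendstoInMeasure_of_tendsto_Lp (f := fun n => T (s n)) hTs).exists_seq_tendsto_ae
    refine (Lp.ext ?_).symm
    have h1 : ∀ᵐ u ∂ν, ∀ n, (T (s n) : U → ℝ) u = s n u :=
      ae_all_iff.mpr fun n => hTa (s n)
    filter_upwards [hae, h1, hTa a] with u hu h1u h2u
    have hptw : Tendsto (fun k => s (ns k) u) atTop (𝓝 (a u)) := by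
      have h0 : Tendsto (fun n => s n u) atTop (𝓝 (a u)) :=
        ((ContinuousLinearMap.apply ℝ ℝ u).continuous.tendsto a).comp hs
      exact h0.comp hns.tendsto_atTop
    have hptw' : Tendsto (fun k => s (ns k) u) atTop (𝓝 (g u)) := by
      refine Tendsto.congr (fun k => h1u (ns k)) hu
    rw [h2u]
    exact tendsto_nhds_unique hptw hptw'
  let L : (U →L[ℝ] ℝ) →L[ℝ] Lp ℝ 2 ν := ⟨T, hcont⟩
  have hLa : ∀ a : U →L[ℝ] ℝ, (L a : U → ℝ) =ᵐ[ν] fun u => a u := hTa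
  refine ⟨‖L‖, norm_nonneg L, ?_, ?_⟩
  · intro a b
    have hinner : (∫ u, (L a : U → ℝ) u * (L b : U → ℝ) u ∂ν) = inner ℝ (L a) (L b) := by
      rw [L2.inner_def]
      exact integral_congr_ae (by filter_upwards with u; simp [RCLike.inner_apply] <;> ring)
    have hintc : Integrable (fun u => a u * b u) ν := by
      refine (L2.integrable_inner (𝕜 := ℝ) (L a) (L b)).congr ?_
      filter_upwards [hLa a, hLa b] with u h1 h2
      simp [RCLike.inner_apply, h1, h2] <;> ring
    refine ⟨hintc, ?_⟩
    have heq : (∫ u, a u * b u ∂ν) = inner ℝ (L a) (L b) := by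
      rw [← hinner]
      exact integral_congr_ae (by
        filter_upwards [hLa a, hLa b] with u h1 h2; rw [h1, h2])
    rw [heq]
    calc |inner ℝ (L a) (L b)| ≤ ‖L a‖ * ‖L b‖ := abs_real_inner_le_norm _ _
      _ ≤ (‖L‖ * ‖a‖) * (‖L‖ * ‖b‖) := by
          gcongr <;> [exact L.le_opNorm a; exact L.le_opNorm b]
      _ = ‖L‖ ^ 2 * ‖a‖ * ‖b‖ := by ring
  · intro a
    refine ⟨(innerSL ℝ (L a)).comp L, fun b => ?_⟩
    have heq : (∫ u, a u * b u ∂ν) = inner ℝ (L a) (L b) := by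
      rw [L2.inner_def]
      refine integral_congr_ae ?_
      filter_upwards [hLa a, hLa b] with u h1 h2
      simp [RCLike.inner_apply, h1, h2] <;> ring
    simpa using heq.symm
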